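/- arXiv:2109.08083 — 4 statements merged into one kernel-verified Lean document; each statement's English description precedes it below -/
import Mathlib

section
/- Let A be an n×n integer matrix such that the sum of entries in each row and in each column is zero. Then A can be written as a finite sum of 'simple' matrices, where a simple matrix is one with entries +1 at positions (a,c) and (b,d), entries -1 at positions (a,d) and (b,c) for some rows a≠b and columns c≠d, and 0 elsewhere. -/
/-- The `simple` matrix determined by rows `a, b` and columns `c, d`: it has entry `+1`
at positions `(a,c)` and `(b,d)`, entry `-1` at positions `(a,d)` and `(b,c)`,
and `0` elsewhere (for `a ≠ b`, `c ≠ d`). -/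
def simpleMatrix {n : ℕ} (a b c d : Fin n) : Matrix (Fin n) (Fin n) ℤ :=
  fun i j =>
    (if i = a ∧ j = c then 1 else 0) + (if i = b ∧ j = d then 1 else 0)
      - (if i = a ∧ j = d then 1 else 0) - (if i = b ∧ j = c then 1 else 0)

/-- A matrix is simple if it is `simpleMatrix a b c d` for some rows `a ≠ b`, columns `c ≠ d`. -/
def IsSimple {n : ℕ} (M : Matrix (Fin n) (Fin n) ℤ) : Prop :=
  ∃ a b c d : Fin n, a ≠ b ∧ c ≠ d ∧ M = simpleMatrix a b c d

lemma simple_row_sum {n : ℕ} (a b c d i : Fin n) :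
    ∑ j, simpleMatrix a b c d i j = 0 := by
  simp only [simpleMatrix, Finset.sum_sub_distrib, Finset.sum_add_distrib]
  simp [and_comm, ite_and, Finset.sum_ite_eq']

lemma simple_col_sum {n : ℕ} (a b c d j : Fin n) :
    ∑ i, simpleMatrix a b c d i j = 0 := by
  simp only [simpleMatrix, Finset.sum_sub_distrib, Finset.sum_add_distrib]
  simp [ite_and, Finset.sum_ite_eq']

lemma simple_eq_zero {n : ℕ} (a b c d x y : Fin n)
    (h1 : ¬(x = a ∧ y = c)) (h2 : ¬(x = b ∧ y = d))
    (h3 : ¬(x = a ∧ y = d)) (h4 : ¬(x = b ∧ y = c)) :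
    simpleMatrix a b c d x y = 0 := by
  simp [simpleMatrix, h1, h2, h3, h4]

lemma exists_pos_entry {n : ℕ} (f : Fin n → ℤ) (h : ∑ j, f j = 0) (j : Fin n)
    (hj : f j < 0) : ∃ j', 0 < f j' := by
  by_contra h'
  push_neg at h'
  have : ∑ k, f k < ∑ _k : Fin n, (0 : ℤ) :=
    Finset.sum_lt_sum (fun k _ => h' k) ⟨j, Finset.mem_univ j, hj⟩
  simp [h] at this

lemma exists_neg_entry {n : ℕ} (f : Fin n → ℤ) (h : ∑ j, f j = 0) (j : Fin n)
    (hj : 0 < f j) : ∃ j', f j' < 0 := by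
  obtain ⟨j', hj'⟩ := exists_pos_entry (fun k => -f k) (by simp [h]) j (by simpa using hj)
  exact ⟨j', by omega⟩

lemma key (n : ℕ) : ∀ N (A : Matrix (Fin n) (Fin n) ℤ),
    (∀ i, ∑ j, A i j = 0) → (∀ j, ∑ i, A i j = 0) →
    (∑ p : Fin n × Fin n, (A p.1 p.2).natAbs) ≤ N →
    ∃ L : List (Matrix (Fin n) (Fin n) ℤ), (∀ M ∈ L, IsSimple M) ∧ L.sum = A := by
  intro N
  induction N with
  | zero =>
    intro A _ _ hm
    refine ⟨[], by simp, ?_⟩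
    have h0 : ∀ p ∈ (Finset.univ : Finset (Fin n × Fin n)), (A p.1 p.2).natAbs = 0 := by
      rw [← Finset.sum_eq_zero_iff]
      omega
    ext x y
    have := h0 (x, y) (Finset.mem_univ _)
    simp only [Matrix.zero_apply, List.sum_nil]
    exact (Int.natAbs_eq_zero.mp this).symm
  | succ N ih =>
    intro A hr hc hm
    by_cases hA : A = 0
    · exact ⟨[], by simp, by simp [hA]⟩
    · -- find a positive entry
      have hne : ∃ x y, A x y ≠ 0 := by
        by_contra h
        push_neg at h
        exact hA (by ext x y; simp [h])
      obtain ⟨x, y, hxy⟩ := hne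
      have hpos : ∃ i j, 0 < A i j := by
        rcases lt_or_gt_of_ne hxy with h | h
        · obtain ⟨j', hj'⟩ := exists_pos_entry (A x) (hr x) y h
          exact ⟨x, j', hj'⟩
        · exact ⟨x, y, h⟩
      obtain ⟨i, j, hij⟩ := hpos
      obtain ⟨j', hj'⟩ := exists_neg_entry (A i) (hr i) j hij
      obtain ⟨i', hi'⟩ := exists_neg_entry (fun k => A k j) (hc j) i hij
      have hii' : i ≠ i' := fun h => by rw [h] at hij; omega
      have hjj' : j ≠ j' := fun h => by rw [h] at hij; omega
      set S := simpleMatrix i i' j j' with hS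
      set B := A - S with hB
      have hBapp : ∀ x y, B x y = A x y - S x y := fun _ _ => rfl
      -- S values at the four cells
      have hS1 : S i j = 1 := by
        simp [hS, simpleMatrix, hii', hjj', hii'.symm, hjj'.symm]
      have hS2 : S i j' = -1 := by
        simp [hS, simpleMatrix, hii', hjj', hii'.symm, hjj'.symm]
      have hS3 : S i' j = -1 := by
        simp [hS, simpleMatrix, hii', hjj', hii'.symm, hjj'.symm]
      have hS4 : S i' j' = 1 := by
        simp [hS, simpleMatrix, hii', hjj', hii'.symm, hjj'.symm]
      have hrB : ∀ i₀, ∑ j₀, B i₀ j₀ = 0 := by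
        intro i₀
        simp only [hBapp, Finset.sum_sub_distrib, hr i₀, hS, simple_row_sum, sub_zero]
      have hcB : ∀ j₀, ∑ i₀, B i₀ j₀ = 0 := by
        intro j₀
        simp only [hBapp, Finset.sum_sub_distrib, hc j₀, hS, simple_col_sum, sub_zero]
      -- measure decreases
      have hmB : (∑ p : Fin n × Fin n, (B p.1 p.2).natAbs) ≤ N := by
        classical
        set t : Finset (Fin n × Fin n) := {(i, j), (i, j'), (i', j), (i', j')} with ht
        have hsub : t ⊆ Finset.univ := Finset.subset_univ t
        have hsplit : ∀ (C : Matrix (Fin n) (Fin n) ℤ),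
            (∑ p : Fin n × Fin n, (C p.1 p.2).natAbs) =
            (∑ p ∈ Finset.univ \ t, (C p.1 p.2).natAbs) + ∑ p ∈ t, (C p.1 p.2).natAbs :=
          fun C => (Finset.sum_sdiff hsub).symm
        have hagree : ∀ p ∈ Finset.univ \ t, (B p.1 p.2).natAbs = (A p.1 p.2).natAbs := by
          intro p hp
          simp only [Finset.mem_sdiff, ht, Finset.mem_insert, Finset.mem_singleton] at hp
          obtain ⟨-, hp⟩ := hp
          push_neg at hp
          obtain ⟨h1, h2, h3, h4⟩ := hp
          have hz : S p.1 p.2 = 0 := by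
            rw [hS]
            exact simple_eq_zero i i' j j' p.1 p.2
              (fun ⟨ha, hb⟩ => h1 (Prod.ext ha hb))
              (fun ⟨ha, hb⟩ => h4 (Prod.ext ha hb))
              (fun ⟨ha, hb⟩ => h2 (Prod.ext ha hb))
              (fun ⟨ha, hb⟩ => h3 (Prod.ext ha hb))
          rw [hBapp, hz, sub_zero]
        have hteq : ∀ (C : Matrix (Fin n) (Fin n) ℤ),
            (∑ p ∈ t, (C p.1 p.2).natAbs) =
            (C i j).natAbs + (C i j').natAbs + (C i' j).natAbs + (C i' j').natAbs := by
          intro C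
          rw [ht]
          rw [Finset.sum_insert (by simp [Prod.ext_iff, hii', hjj']),
            Finset.sum_insert (by simp [Prod.ext_iff, hii', hjj']),
            Finset.sum_insert (by simp [Prod.ext_iff, hii', hjj']),
            Finset.sum_singleton]
          ring
        have hlt : (∑ p : Fin n × Fin n, (B p.1 p.2).natAbs) + 1 ≤
            ∑ p : Fin n × Fin n, (A p.1 p.2).natAbs := by
          rw [hsplit B, hsplit A, Finset.sum_congr rfl hagree, hteq B, hteq A]
          have e1 : B i j = A i j - 1 := by rw [hBapp, hS1]
          have e2 : B i j' = A i j' + 1 := by rw [hBapp, hS2]; ring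
          have e3 : B i' j = A i' j + 1 := by rw [hBapp, hS3]; ring
          have e4 : B i' j' = A i' j' - 1 := by rw [hBapp, hS4]
          rw [e1, e2, e3, e4]
          omega
        omega
      obtain ⟨L, hL, hLsum⟩ := ih B hrB hcB hmB
      refine ⟨S :: L, ?_, ?_⟩
      · rintro M hM
        rcases List.mem_cons.mp hM with h | h
        · exact ⟨i, i', j, j', hii', hjj', h⟩
        · exact hL M h
      · simp [hLsum, hB]

/-- Any integer matrix all of whose row sums and column sums are zero is a finite sum
of simple matrices. -/
theorem sum_of_simple_matrices (n : ℕ) (A : Matrix (Fin n) (Fin n) ℤ)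
    (hrow : ∀ i, ∑ j, A i j = 0) (hcol : ∀ j, ∑ i, A i j = 0) :
    ∃ L : List (Matrix (Fin n) (Fin n) ℤ), (∀ M ∈ L, IsSimple M) ∧ L.sum = A := by
  exact key n (∑ p : Fin n × Fin n, (A p.1 p.2).natAbs) A hrow hcol le_rfl
end

section
/- Let n ≥ 1 and let v : ZMod n → ℤ satisfy ∑_i v(i) = 0 (as integers) and ∑_i i·(v(i) mod n) = 0 in ZMod n. Then v lies in the integer span of the vectors e_a - e_b - e_c + e_{b+c-a} for a,b,c ∈ ZMod n. -/
/-- The indicator vector of `x : ZMod n`. -/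
def eVec {n : ℕ} (x : ZMod n) : ZMod n → ℤ := fun i => if i = x then 1 else 0

/-- The SQ-generator `e_a - e_b - e_c + e_{b+c-a}`. -/
def sqGen {n : ℕ} (a b c : ZMod n) : ZMod n → ℤ :=
  fun i => eVec a i - eVec b i - eVec c i + eVec (b + c - a) i

/-- If `v : ZMod n → ℤ` satisfies `∑ v i = 0` (in `ℤ`) and `∑ i • v i = 0` in `ZMod n`, then
`v` lies in the integer span of the vectors `e_a - e_b - e_c + e_{b+c-a}`. -/
theorem mem_span_of_zero_sums (n : ℕ) [NeZero n] (v : ZMod n → ℤ)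
    (h1 : ∑ i : ZMod n, v i = 0)
    (h2 : ∑ i : ZMod n, (v i : ZMod n) * i = 0) :
    v ∈ AddSubgroup.closure {w : ZMod n → ℤ | ∃ a b c : ZMod n, w = sqGen a b c} := by
  set S := AddSubgroup.closure {w : ZMod n → ℤ | ∃ a b c : ZMod n, w = sqGen a b c} with hS
  let mk : (ZMod n → ℤ) →+ (ZMod n → ℤ) ⧸ S := QuotientAddGroup.mk' S
  have hgen : ∀ a b c : ZMod n, sqGen a b c ∈ S := fun a b c =>
    AddSubgroup.subset_closure ⟨a, b, c, rfl⟩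
  have key : ∀ x y : ZMod n,
      sqGen (0 : ZMod n) x y
        = (eVec (x + y) - eVec 0) - (eVec x - eVec 0) - (eVec y - eVec 0) := by
    intro x y
    funext i
    simp [sqGen]
    ring
  let φ : ZMod n →+ (ZMod n → ℤ) ⧸ S :=
    AddMonoidHom.mk' (fun x => mk (eVec x - eVec 0)) (by
      intro x y
      have h0 : mk (sqGen (0 : ZMod n) x y) = 0 :=
        (QuotientAddGroup.eq_zero_iff _).mpr (hgen 0 x y)
      rw [key x y] at h0
      simp only [map_sub] at h0 ⊢
      linear_combination (norm := abel) h0)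
  have hv : v = ∑ x : ZMod n, v x • eVec x := by
    funext i
    simp [eVec, Finset.sum_ite_eq' Finset.univ i (fun x => v x)]
  have hmkv : mk v = 0 := by
    rw [hv, map_sum]
    have : ∀ x : ZMod n, mk (v x • eVec x) = v x • φ x + v x • mk (eVec 0) := by
      intro x
      rw [map_zsmul]
      have : mk (eVec x) = φ x + mk (eVec 0) := by
        show _ = mk (eVec x - eVec 0) + mk (eVec 0)
        rw [← map_add]; congr 1; abel
      rw [this, zsmul_add]
    simp only [this]
    rw [Finset.sum_add_distrib, ← Finset.sum_smul, h1, zero_smul, add_zero]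
    have : ∀ x : ZMod n, v x • φ x = φ ((v x : ZMod n) * x) := by
      intro x
      rw [← map_zsmul φ]
      congr 1
      rw [zsmul_eq_mul]
    simp only [this]
    rw [← map_sum φ, h2, map_zero]
  have := (QuotientAddGroup.eq_zero_iff v).mp hmkv
  exact this
end

section
/- Suppose the complete toroidal n-queens system admits a perfect matching, that is, there exists a permutation σ of ZMod n such that i ↦ i + σ(i) and i ↦ i - σ(i) are both bijections of ZMod n. Then n is coprime to 6. -/
open Finset

lemma sq_sum_aux (m : ℕ) : 6 * ∑ k ∈ range (m + 1), k ^ 2 = m * (m + 1) * (2 * m + 1) := by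
  induction m with
  | zero => simp
  | succ l ih => rw [Finset.sum_range_succ, Nat.mul_add, ih]; ring

lemma sq_sum_formula (n : ℕ) : 6 * ∑ k ∈ range n, k ^ 2 = n * (n - 1) * (2 * n - 1) := by
  cases n with
  | zero => simp
  | succ m =>
    rw [sq_sum_aux]
    have h1 : m + 1 - 1 = m := rfl
    have h2 : 2 * (m + 1) - 1 = 2 * m + 1 := by omega
    rw [h1, h2]; ring

lemma zmod_sum_eq (n : ℕ) [NeZero n] (g : ZMod n → ZMod n) :
    ∑ i : ZMod n, g i = ∑ k ∈ range n, g (k : ZMod n) := by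
  symm
  refine Finset.sum_nbij' (fun k : ℕ => (k : ZMod n)) (fun i => ZMod.val i) ?_ ?_ ?_ ?_ ?_
  · intro a _; exact Finset.mem_univ _
  · intro a _; exact Finset.mem_range.mpr (ZMod.val_lt a)
  · intro a ha; exact ZMod.val_cast_of_lt (Finset.mem_range.mp ha)
  · intro a _; exact ZMod.natCast_rightInverse a
  · intro a _; rfl

/-- If there is a toroidal `n`-queens solution, i.e. a permutation `σ` of `ZMod n` such that
`i ↦ i + σ i` and `i ↦ i - σ i` are both bijections of `ZMod n`, then `n` is coprime to `6`. -/
theorem coprime_six_of_toroidal_solution (n : ℕ) (hn : 0 < n) (σ : Equiv.Perm (ZMod n))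
    (hsum : Function.Bijective (fun i : ZMod n => i + σ i))
    (hdiff : Function.Bijective (fun i : ZMod n => i - σ i)) :
    Nat.Coprime n 6 := by
  haveI : NeZero n := ⟨hn.ne'⟩
  have hσS : ∑ i : ZMod n, σ i = ∑ i : ZMod n, i := Equiv.sum_comp σ id
  have h1 : ∑ i : ZMod n, (i + σ i) = ∑ i : ZMod n, i := hsum.sum_comp id
  have hS0 : ∑ i : ZMod n, i = (0 : ZMod n) := by
    have key : ∑ i : ZMod n, (i + σ i) = (∑ i : ZMod n, i) + ∑ i : ZMod n, i := by
      rw [Finset.sum_add_distrib, hσS]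
    rw [h1] at key
    have := key.symm
    rwa [add_eq_left] at this
  have hσQ : ∑ i : ZMod n, (σ i) ^ 2 = ∑ i : ZMod n, i ^ 2 :=
    Equiv.sum_comp σ (fun x => x ^ 2)
  have h2 : ∑ i : ZMod n, (i + σ i) ^ 2 = ∑ i : ZMod n, i ^ 2 :=
    hsum.sum_comp (fun x => x ^ 2)
  have h3 : ∑ i : ZMod n, (i - σ i) ^ 2 = ∑ i : ZMod n, i ^ 2 :=
    hdiff.sum_comp (fun x => x ^ 2)
  have h2Q : 2 * ∑ i : ZMod n, i ^ 2 = (0 : ZMod n) := by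
    have hexp : ∑ i : ZMod n, ((i + σ i) ^ 2 + (i - σ i) ^ 2)
        = 2 * (∑ i : ZMod n, i ^ 2) + 2 * ∑ i : ZMod n, i ^ 2 := by
      have he : ∀ i : ZMod n, (i + σ i) ^ 2 + (i - σ i) ^ 2
          = 2 * i ^ 2 + 2 * (σ i) ^ 2 := fun i => by ring
      rw [Finset.sum_congr rfl (fun i _ => he i), Finset.sum_add_distrib,
        ← Finset.mul_sum, ← Finset.mul_sum, hσQ]
    rw [Finset.sum_add_distrib, h2, h3] at hexp
    linear_combination -hexp
  have hScast : ((∑ k ∈ range n, k : ℕ) : ZMod n) = ∑ i : ZMod n, i := by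
    rw [zmod_sum_eq n (fun x : ZMod n => x)]; push_cast; rfl
  have hQcast : ((∑ k ∈ range n, k ^ 2 : ℕ) : ZMod n) = ∑ i : ZMod n, i ^ 2 := by
    rw [zmod_sum_eq n (fun x : ZMod n => x ^ 2)]; push_cast; rfl
  have hdvdS : n ∣ ∑ k ∈ range n, k := by
    rw [← ZMod.natCast_eq_zero_iff, hScast, hS0]
  have hdvd2Q : n ∣ 2 * ∑ k ∈ range n, k ^ 2 := by
    rw [← ZMod.natCast_eq_zero_iff, Nat.cast_mul, hQcast, Nat.cast_two, h2Q]
  -- n odd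
  have hodd : ¬ 2 ∣ n := by
    rintro ⟨m, hm⟩
    have hd : n * 2 ∣ n * (n - 1) := by
      rw [← Finset.sum_range_id_mul_two n]
      exact mul_dvd_mul hdvdS dvd_rfl
    have h2d : 2 ∣ n - 1 := (Nat.mul_dvd_mul_iff_left hn).mp hd
    omega
  have hcop2 : Nat.Coprime n 2 :=
    Nat.coprime_comm.mp ((Nat.Prime.coprime_iff_not_dvd Nat.prime_two).mpr hodd)
  have hdvdQ : n ∣ ∑ k ∈ range n, k ^ 2 := Nat.Coprime.dvd_of_dvd_mul_left hcop2 hdvd2Q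
  have h3n : ¬ 3 ∣ n := by
    intro h3n
    have h66 : n * 6 ∣ n * ((n - 1) * (2 * n - 1)) := by
      have h1' := mul_dvd_mul hdvdQ (dvd_refl 6)
      rw [mul_comm (∑ k ∈ range n, k ^ 2) 6, sq_sum_formula n] at h1'
      rwa [mul_assoc] at h1'
    have h6 : 6 ∣ (n - 1) * (2 * n - 1) := (Nat.mul_dvd_mul_iff_left hn).mp h66
    have h3d : 3 ∣ (n - 1) * (2 * n - 1) := dvd_trans ⟨2, rfl⟩ h6
    rcases (Nat.Prime.dvd_mul Nat.prime_three).mp h3d with h | h <;> omega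
  have hp3 : Nat.Coprime n 3 :=
    Nat.coprime_comm.mp ((Nat.Prime.coprime_iff_not_dvd Nat.prime_three).mpr h3n)
  have : Nat.Coprime n (2 * 3) := Nat.Coprime.mul_right hcop2 hp3
  simpa using this
end

section
/- Let n be a sufficiently large natural number and 0 < α < 1. Setting p(i) = 1 - i/n, the sum ∑_{i=0}^{⌊n - n^{1-α}⌋ - 1} log(p(i)) equals -n + O(n^{1-α} log n); precisely, |∑_{i=0}^{⌊n-n^{1-α}⌋-1} log(1 - i/n) + n| ≤ C · n^{1-α} · log n for some constant C and all large n. -/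
open Real Finset

private lemma aux_pow_le_exp_mul_factorial (n : ℕ) :
    (n : ℝ) ^ n ≤ Real.exp n * n.factorial := by
  induction n with
  | zero => simp
  | succ n ih =>
    have key : ((n : ℝ) + 1) ^ n ≤ Real.exp 1 * (n : ℝ) ^ n := by
      rcases Nat.eq_zero_or_pos n with h | h
      · subst h; simpa using Real.one_le_exp zero_le_one
      · have hn : (0 : ℝ) < n := by exact_mod_cast h
        have h1 : (n : ℝ) + 1 ≤ Real.exp (1 / n) * n := by
          have := Real.add_one_le_exp (1 / (n : ℝ))
          have h2 : ((1 / (n : ℝ)) + 1) * n ≤ Real.exp (1 / n) * n := by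
            exact mul_le_mul_of_nonneg_right this hn.le
          calc (n : ℝ) + 1 = (1 / (n : ℝ) + 1) * n := by field_simp; ring
            _ ≤ _ := h2
        calc ((n : ℝ) + 1) ^ n ≤ (Real.exp (1 / n) * n) ^ n := by
              apply pow_le_pow_left₀ (by positivity) h1
          _ = Real.exp (1 / n) ^ n * (n : ℝ) ^ n := mul_pow _ _ _
          _ = Real.exp 1 * (n : ℝ) ^ n := by
              rw [← Real.exp_nat_mul]; congr 1; field_simp
    have hfac : (0 : ℝ) ≤ Real.exp n * n.factorial := by positivity
    push_cast [Nat.factorial_succ, pow_succ]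
    calc ((n : ℝ) + 1) ^ n * ((n : ℝ) + 1)
        ≤ (Real.exp 1 * (n : ℝ) ^ n) * ((n : ℝ) + 1) := by
          apply mul_le_mul_of_nonneg_right key (by positivity)
      _ ≤ (Real.exp 1 * (Real.exp n * n.factorial)) * ((n : ℝ) + 1) := by
          apply mul_le_mul_of_nonneg_right _ (by positivity)
          exact mul_le_mul_of_nonneg_left ih (Real.exp_pos 1).le
      _ = Real.exp ((n : ℝ) + 1) * (((n : ℝ) + 1) * n.factorial) := by
          rw [Real.exp_add]; ring

private lemma aux_exp_mul_factorial_le (n : ℕ) (hn : 1 ≤ n) :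
    Real.exp n * n.factorial ≤ Real.exp 1 * (n : ℝ) ^ (n + 1) := by
  induction n, hn using Nat.le_induction with
  | base => norm_num
  | succ n hn ih =>
    have hnp : (0 : ℝ) < n := by exact_mod_cast hn
    have key : Real.exp 1 * (n : ℝ) ^ (n + 1) ≤ ((n : ℝ) + 1) ^ (n + 1) := by
      have h1 : Real.exp (1 / ((n : ℝ) + 1)) * n ≤ (n : ℝ) + 1 := by
        have h2 := Real.add_one_le_exp (-(1 / ((n : ℝ) + 1)))
        have h3 : -(1 / ((n : ℝ) + 1)) + 1 = (n : ℝ) / (n + 1) := by field_simp; ring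
        rw [h3, Real.exp_neg] at h2
        have h4 : (0 : ℝ) < Real.exp (1 / ((n : ℝ) + 1)) := Real.exp_pos _
        rw [div_le_iff₀ (by positivity)] at h2
        rw [mul_comm]
        calc (n:ℝ) * Real.exp (1/((n:ℝ)+1)) ≤ ((Real.exp (1/((n:ℝ)+1)))⁻¹ * (↑n+1)) * Real.exp (1/((n:ℝ)+1)) := by
              apply mul_le_mul_of_nonneg_right h2 h4.le
          _ = (n:ℝ)+1 := by field_simp
      calc Real.exp 1 * (n : ℝ) ^ (n + 1)
          = (Real.exp (1 / ((n : ℝ) + 1)) * n) ^ (n + 1) := by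
            rw [mul_pow, ← Real.exp_nat_mul]; push_cast; congr 2; field_simp
        _ ≤ ((n : ℝ) + 1) ^ (n + 1) := by
            apply pow_le_pow_left₀ (by positivity) h1
    push_cast [Nat.factorial_succ, Real.exp_add]
    calc Real.exp n * Real.exp 1 * (((n : ℝ) + 1) * n.factorial)
        = ((n : ℝ) + 1) * (Real.exp 1 * (Real.exp n * n.factorial)) := by ring
      _ ≤ ((n : ℝ) + 1) * (Real.exp 1 * (Real.exp 1 * (n : ℝ) ^ (n + 1))) := by
          apply mul_le_mul_of_nonneg_left _ (by positivity)
          exact mul_le_mul_of_nonneg_left ih (Real.exp_pos 1).le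
      _ ≤ ((n : ℝ) + 1) * (Real.exp 1 * ((n : ℝ) + 1) ^ (n + 1)) := by
          apply mul_le_mul_of_nonneg_left _ (by positivity)
          exact mul_le_mul_of_nonneg_left key (Real.exp_pos 1).le
      _ = Real.exp 1 * (((n : ℝ) + 1) ^ (n + 1 + 1)) := by ring

private lemma aux_log_factorial_lb (n : ℕ) (hn : 1 ≤ n) :
    (n : ℝ) * Real.log n - n ≤ Real.log n.factorial := by
  have hnp : (0 : ℝ) < n := by exact_mod_cast hn
  have hfp : (0 : ℝ) < (n.factorial : ℝ) := by exact_mod_cast n.factorial_pos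
  have h := Real.log_le_log (by positivity) (aux_pow_le_exp_mul_factorial n)
  rw [Real.log_pow, Real.log_mul (Real.exp_ne_zero _) hfp.ne', Real.log_exp] at h
  linarith

private lemma aux_log_factorial_ub (n : ℕ) (hn : 1 ≤ n) :
    Real.log n.factorial ≤ ((n : ℝ) + 1) * Real.log n - n + 1 := by
  have hnp : (0 : ℝ) < n := by exact_mod_cast hn
  have hfp : (0 : ℝ) < (n.factorial : ℝ) := by exact_mod_cast n.factorial_pos
  have h := Real.log_le_log (by positivity) (aux_exp_mul_factorial_le n hn)
  rw [Real.log_mul (Real.exp_ne_zero _) hfp.ne',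
    Real.log_mul (Real.exp_ne_zero _) (by positivity), Real.log_exp, Real.log_exp,
    Real.log_pow] at h
  push_cast at h ⊢
  linarith

private lemma aux_sum_log (n : ℕ) : ∀ m : ℕ, m ≤ n →
    ∑ i ∈ Finset.range m, Real.log ((n : ℝ) - i) =
      Real.log n.factorial - Real.log (n - m).factorial := by
  intro m
  induction m with
  | zero => simp
  | succ m ih =>
    intro hmn
    have hm : m ≤ n := by omega
    rw [Finset.sum_range_succ, ih hm]
    set j := n - (m + 1) with hj
    have hnm : n - m = j + 1 := by omega
    have hcast : (n : ℝ) - m = (j : ℝ) + 1 := by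
      have : n = j + 1 + m := by omega
      rw [this]; push_cast; ring
    rw [hnm, hcast, Nat.factorial_succ]
    have hjp : (0 : ℝ) < (j : ℝ) + 1 := by positivity
    have hfp : (0 : ℝ) < (j.factorial : ℝ) := by exact_mod_cast j.factorial_pos
    push_cast
    rw [Real.log_mul hjp.ne' hfp.ne']
    ring

/-- For fixed `0 < α < 1`, with `p i = 1 - i / n`, we have
`∑_{i=0}^{⌊n - n^{1-α}⌋ - 1} log (p i) = -n + O(n^{1-α} log n)` as `n → ∞`. -/
theorem sum_log_p_asymptotics (α : ℝ) (h0 : 0 < α) (h1 : α < 1) :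
    ∃ C : ℝ, ∃ N : ℕ, ∀ n : ℕ, N ≤ n →
      |(∑ i ∈ Finset.range ⌊(n : ℝ) - (n : ℝ) ^ (1 - α)⌋₊, Real.log (1 - (i : ℝ) / n)) + n| ≤
        C * (n : ℝ) ^ (1 - α) * Real.log n := by
  have hA : Filter.Tendsto (fun n : ℕ => (n : ℝ) ^ (1 - α)) Filter.atTop Filter.atTop :=
    (tendsto_rpow_atTop (by linarith : (0:ℝ) < 1 - α)).comp tendsto_natCast_atTop_atTop
  have hB : Filter.Tendsto (fun n : ℕ => Real.log n) Filter.atTop Filter.atTop :=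
    Real.tendsto_log_atTop.comp tendsto_natCast_atTop_atTop
  obtain ⟨N1, hN1⟩ := Filter.eventually_atTop.mp (hA.eventually_ge_atTop 2)
  obtain ⟨N2, hN2⟩ := Filter.eventually_atTop.mp (hB.eventually_ge_atTop 1)
  refine ⟨4, max (max N1 N2) 1, fun n hn => ?_⟩
  have hn1 : 1 ≤ n := le_trans (le_max_right _ _) hn
  have hx2 : 2 ≤ (n : ℝ) ^ (1 - α) := hN1 n (le_trans (le_trans (le_max_left _ _) (le_max_left _ _)) hn)
  have hlog1 : 1 ≤ Real.log n := hN2 n (le_trans (le_trans (le_max_right _ _) (le_max_left _ _)) hn)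
  set x := (n : ℝ) ^ (1 - α) with hxdef
  have hnp : (0 : ℝ) < n := by exact_mod_cast hn1
  have hn1R : (1 : ℝ) ≤ n := by exact_mod_cast hn1
  have hxn : x ≤ n := by
    calc x ≤ (n : ℝ) ^ (1 : ℝ) := Real.rpow_le_rpow_of_exponent_le hn1R (by linarith)
      _ = n := Real.rpow_one n
  set m := ⌊(n : ℝ) - x⌋₊ with hmdef
  have hmn : m ≤ n := by
    have : ((n : ℝ) - x) ≤ (n : ℕ) := by push_cast; linarith
    calc m ≤ ⌊((n : ℕ) : ℝ)⌋₊ := Nat.floor_le_floor this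
      _ = n := Nat.floor_natCast n
  have hm_le : (m : ℝ) ≤ (n : ℝ) - x := Nat.floor_le (by linarith)
  have hm_gt : (n : ℝ) - x < m + 1 := Nat.lt_floor_add_one _
  set k := n - m with hkdef
  have hk : (k : ℝ) = (n : ℝ) - m := by
    rw [hkdef]; exact Nat.cast_sub hmn
  have hk_low : x ≤ k := by rw [hk]; linarith
  have hk_up : (k : ℝ) ≤ x + 1 := by rw [hk]; linarith
  -- rewrite the sum
  have hterm : ∀ i ∈ Finset.range m, Real.log (1 - (i : ℝ) / n) =
      Real.log ((n : ℝ) - i) - Real.log n := by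
    intro i hi
    have hi' : i < n := lt_of_lt_of_le (Finset.mem_range.mp hi) hmn
    have hpos : (0 : ℝ) < (n : ℝ) - i := by
      have : (i : ℝ) < n := by exact_mod_cast hi'
      linarith
    rw [show (1 : ℝ) - (i : ℝ) / n = ((n : ℝ) - i) / n by field_simp]
    exact Real.log_div hpos.ne' hnp.ne'
  rw [Finset.sum_congr rfl hterm, Finset.sum_sub_distrib, Finset.sum_const,
    Finset.card_range, aux_sum_log n m hmn, ← hkdef]
  -- factorial bounds
  have hk1 : 1 ≤ k := by
    have : (0 : ℝ) < k := by linarith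
    exact_mod_cast this
  have LBn := aux_log_factorial_lb n hn1
  have UBn := aux_log_factorial_ub n hn1
  have LBk : (0 : ℝ) ≤ Real.log k.factorial :=
    Real.log_nonneg (by exact_mod_cast k.factorial_pos)
  have UBk : Real.log k.factorial ≤ (k : ℝ) * Real.log n := by
    have hfle : (k.factorial : ℝ) ≤ (n : ℝ) ^ k := by
      exact_mod_cast le_trans k.factorial_le_pow
        (Nat.pow_le_pow_left (by omega : k ≤ n) k)
    calc Real.log k.factorial ≤ Real.log ((n : ℝ) ^ k) :=
          Real.log_le_log (by exact_mod_cast k.factorial_pos) hfle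
      _ = (k : ℝ) * Real.log n := by rw [Real.log_pow]
  have hkm : (k : ℝ) + m = n := by rw [hk]; ring
  have hzero : (n : ℝ) * Real.log n - (k : ℝ) * Real.log n - (m : ℝ) * Real.log n = 0 := by
    rw [← hkm]; ring
  rw [nsmul_eq_mul]
  set T := Real.log n.factorial - Real.log k.factorial - (m : ℝ) * Real.log n + n with hT
  have heq : ((n : ℝ) + 1) * Real.log n - (m : ℝ) * Real.log n
      = ((k : ℝ) + 1) * Real.log n := by rw [← hkm]; ring
  have hlow : 0 ≤ T := by rw [hT]; linarith
  have hup : T ≤ ((k : ℝ) + 1) * Real.log n + 1 := by rw [hT]; linarith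
  have hlogpos : (0 : ℝ) ≤ Real.log n := by linarith
  have h2x : ((k : ℝ) + 1) * Real.log n ≤ 2 * x * Real.log n :=
    mul_le_mul_of_nonneg_right (by linarith) hlogpos
  have h1x : 1 ≤ x * Real.log n := by nlinarith
  rw [abs_of_nonneg hlow]
  nlinarith [mul_nonneg (by linarith : (0:ℝ) ≤ x) hlogpos]
end
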